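/- Let f : [a,b] → ℝ be (l,L)-Lipschitzian and S = (f(b)-f(a))/(b-a). Then for all h ∈ [0,1] and all x with a + h(b-a)/2 ≤ x ≤ b - h(b-a)/2, we have |(b-a){[f(x) - l(x - (a+b)/2)](1-h) + h(f(a)+f(b))/2} - ∫ₐᵇ f(t)dt| ≤ (b-a) · max{h(b-a)/2, x - a - h(b-a)/2, b - x - h(b-a)/2} · (S - l). -/

import Mathlib

open MeasureTheory intervalIntegral

theorem stmt_1 (a b l L : ℝ) (f : ℝ → ℝ) (hab : a < b) (hlL : l < L)
    (hf : ∀ x₁ x₂, a ≤ x₁ → x₁ ≤ x₂ → x₂ ≤ b →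
      l * (x₂ - x₁) ≤ f x₂ - f x₁ ∧ f x₂ - f x₁ ≤ L * (x₂ - x₁))
    (hint : IntervalIntegrable f MeasureTheory.volume a b)
    (S : ℝ) (hS : S = (f b - f a) / (b - a))
    (h x : ℝ) (hh : h ∈ Set.Icc (0:ℝ) 1)
    (hx1 : a + h * (b - a) / 2 ≤ x) (hx2 : x ≤ b - h * (b - a) / 2) :
    |(b - a) * ((f x - l * (x - (a + b) / 2)) * (1 - h)
        + h * (f a + f b) / 2) - ∫ t in a..b, f t| ≤
      (b - a) * max (h * (b - a) / 2) (max (x - a - h * (b - a) / 2) (b - x - h * (b - a) / 2))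
        * (S - l) := by
  obtain ⟨hh0, hh1⟩ := hh
  set g : ℝ → ℝ := fun t => f t - l * t with hg
  have hgmono : ∀ x₁ x₂, a ≤ x₁ → x₁ ≤ x₂ → x₂ ≤ b → g x₁ ≤ g x₂ := by
    intro x₁ x₂ h1 h2 h3
    have := (hf x₁ x₂ h1 h2 h3).1
    simp only [hg]; nlinarith
  set p := a + h * (b - a) / 2 with hp
  set q := b - h * (b - a) / 2 with hq
  have hab' : a ≤ b := hab.le
  have hhb : 0 ≤ h * (b - a) / 2 :=
    div_nonneg (mul_nonneg hh0 (by linarith)) (by norm_num)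
  have hap : a ≤ p := by rw [hp]; linarith
  have hpx : p ≤ x := hx1
  have hxq : x ≤ q := hx2
  have hqb : q ≤ b := by rw [hq]; linarith
  have hpb : p ≤ b := le_trans hpx (le_trans hxq hqb)
  have hax : a ≤ x := le_trans hap hpx
  have hxb : x ≤ b := le_trans hxq hqb
  have haq : a ≤ q := le_trans hax hxq
  have hicc : ∀ c d : ℝ, a ≤ c → c ≤ d → d ≤ b → Set.uIcc c d ⊆ Set.uIcc a b := by
    intro c d h1 h2 h3
    rw [Set.uIcc_of_le h2, Set.uIcc_of_le hab']
    exact Set.Icc_subset_Icc h1 h3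
  have hlin : IntervalIntegrable (fun t : ℝ => l * t) volume a b :=
    (continuous_const.mul continuous_id).intervalIntegrable a b
  have hgint : IntervalIntegrable g volume a b := hint.sub hlin
  have hI1 : IntervalIntegrable g volume a p := hgint.mono_set (hicc a p le_rfl hap hpb)
  have hI2 : IntervalIntegrable g volume p x := hgint.mono_set (hicc p x hap hpx hxb)
  have hI3 : IntervalIntegrable g volume x q := hgint.mono_set (hicc x q hax hxq hqb)
  have hI4 : IntervalIntegrable g volume q b := hgint.mono_set (hicc q b haq hqb le_rfl)
  have hI23 : IntervalIntegrable g volume p q := hgint.mono_set (hicc p q hap (le_trans hpx hxq) hqb)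
  have hga : g a = f a - l * a := rfl
  have hgb : g b = f b - l * b := rfl
  have hgx : g x = f x - l * x := rfl
  -- split the integral
  have hsplit : ∫ t in a..b, g t = (∫ t in a..p, g t) + (∫ t in p..q, g t) + (∫ t in q..b, g t) := by
    rw [← integral_add_adjacent_intervals (hI1.trans hI23) hI4,
        ← integral_add_adjacent_intervals hI1 hI23]
  have hsplit2 : ∫ t in p..q, g t = (∫ t in p..x, g t) + (∫ t in x..q, g t) :=
    (integral_add_adjacent_intervals hI2 hI3).symm
  have hgf : ∫ t in a..b, g t = (∫ t in a..b, f t) - l * ((b ^ 2 - a ^ 2) / 2) := by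
    simp only [hg]
    rw [integral_sub hint hlin, intervalIntegral.integral_const_mul, integral_id]
  -- key identity
  have key : (b - a) * ((f x - l * (x - (a + b) / 2)) * (1 - h) + h * (f a + f b) / 2)
      - ∫ t in a..b, f t
      = (∫ t in a..p, (g a - g t)) + (∫ t in p..q, (g x - g t)) + (∫ t in q..b, (g b - g t)) := by
    rw [integral_sub intervalIntegrable_const hI1,
        integral_sub intervalIntegrable_const hI23,
        integral_sub intervalIntegrable_const hI4]
    simp only [intervalIntegral.integral_const, smul_eq_mul]
    have hfab : ∫ t in a..b, f t = (∫ t in a..b, g t) + l * ((b ^ 2 - a ^ 2) / 2) := by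
      rw [hgf]; ring
    rw [hfab, hsplit, hga, hgb, hgx, hp, hq]
    ring
  set M := max (h * (b - a) / 2) (max (x - a - h * (b - a) / 2) (b - x - h * (b - a) / 2)) with hM
  have hM1 : h * (b - a) / 2 ≤ M := le_max_left _ _
  have hM2 : x - p ≤ M := by
    have h1 := le_max_left (x - a - h * (b - a) / 2) (b - x - h * (b - a) / 2)
    have h2 := le_max_right (h * (b - a) / 2) (max (x - a - h * (b - a) / 2) (b - x - h * (b - a) / 2))
    rw [hp]; rw [hM]; linarith
  have hM3 : q - x ≤ M := by
    have h1 := le_max_right (x - a - h * (b - a) / 2) (b - x - h * (b - a) / 2)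
    have h2 := le_max_right (h * (b - a) / 2) (max (x - a - h * (b - a) / 2) (b - x - h * (b - a) / 2))
    rw [hq]; rw [hM]; linarith
  have hM0 : 0 ≤ M := le_trans hhb hM1
  have hgap : g a ≤ g p := hgmono a p le_rfl hap hpb
  have hgpx : g p ≤ g x := hgmono p x hap hpx hxb
  have hgxq : g x ≤ g q := hgmono x q hax hxq hqb
  have hgqb : g q ≤ g b := hgmono q b haq hqb le_rfl
  have hpa : p - a = h * (b - a) / 2 := by rw [hp]; ring
  have hbq : b - q = h * (b - a) / 2 := by rw [hq]; ring
  -- bounds on the pieces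
  have hA_le : (∫ t in a..p, (g a - g t)) ≤ 0 := by
    have : (∫ t in a..p, (g a - g t)) ≤ ∫ t in a..p, (0:ℝ) := by
      apply integral_mono_on hap (intervalIntegrable_const.sub hI1) intervalIntegrable_const
      intro t ⟨ht1, ht2⟩
      have := hgmono a t le_rfl ht1 (le_trans ht2 hpb)
      linarith
    simpa using this
  have hA_ge : -((p - a) * (g p - g a)) ≤ ∫ t in a..p, (g a - g t) := by
    have : (∫ t in a..p, (g a - g p)) ≤ ∫ t in a..p, (g a - g t) := by
      apply integral_mono_on hap intervalIntegrable_const (intervalIntegrable_const.sub hI1)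
      intro t ⟨ht1, ht2⟩
      have := hgmono t p ht1 ht2 hpb
      linarith
    rw [intervalIntegral.integral_const, smul_eq_mul] at this
    linarith [this]
  have hB1_le : (∫ t in p..x, (g x - g t)) ≤ (x - p) * (g x - g p) := by
    have : (∫ t in p..x, (g x - g t)) ≤ ∫ t in p..x, (g x - g p) := by
      apply integral_mono_on hpx (intervalIntegrable_const.sub hI2) intervalIntegrable_const
      intro t ⟨ht1, ht2⟩
      have := hgmono p t hap ht1 (le_trans ht2 hxb)
      linarith
    rw [intervalIntegral.integral_const, smul_eq_mul] at this
    linarith [this]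
  have hB1_ge : 0 ≤ ∫ t in p..x, (g x - g t) := by
    have : (∫ t in p..x, (0:ℝ)) ≤ ∫ t in p..x, (g x - g t) := by
      apply integral_mono_on hpx intervalIntegrable_const (intervalIntegrable_const.sub hI2)
      intro t ⟨ht1, ht2⟩
      have := hgmono t x (le_trans hap ht1) ht2 hxb
      linarith
    simpa using this
  have hB2_le : (∫ t in x..q, (g x - g t)) ≤ 0 := by
    have : (∫ t in x..q, (g x - g t)) ≤ ∫ t in x..q, (0:ℝ) := by
      apply integral_mono_on hxq (intervalIntegrable_const.sub hI3) intervalIntegrable_const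
      intro t ⟨ht1, ht2⟩
      have := hgmono x t hax ht1 (le_trans ht2 hqb)
      linarith
    simpa using this
  have hB2_ge : -((q - x) * (g q - g x)) ≤ ∫ t in x..q, (g x - g t) := by
    have : (∫ t in x..q, (g x - g q)) ≤ ∫ t in x..q, (g x - g t) := by
      apply integral_mono_on hxq intervalIntegrable_const (intervalIntegrable_const.sub hI3)
      intro t ⟨ht1, ht2⟩
      have := hgmono t q (le_trans hax ht1) ht2 hqb
      linarith
    rw [intervalIntegral.integral_const, smul_eq_mul] at this
    linarith [this]
  have hC_le : (∫ t in q..b, (g b - g t)) ≤ (b - q) * (g b - g q) := by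
    have : (∫ t in q..b, (g b - g t)) ≤ ∫ t in q..b, (g b - g q) := by
      apply integral_mono_on hqb (intervalIntegrable_const.sub hI4) intervalIntegrable_const
      intro t ⟨ht1, ht2⟩
      have := hgmono q t haq ht1 ht2
      linarith
    rw [intervalIntegral.integral_const, smul_eq_mul] at this
    linarith [this]
  have hC_ge : 0 ≤ ∫ t in q..b, (g b - g t) := by
    have : (∫ t in q..b, (0:ℝ)) ≤ ∫ t in q..b, (g b - g t) := by
      apply integral_mono_on hqb intervalIntegrable_const (intervalIntegrable_const.sub hI4)
      intro t ⟨ht1, ht2⟩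
      have := hgmono t b (le_trans haq ht1) ht2 le_rfl
      linarith
    simpa using this
  -- right-hand side
  have hRHS : (b - a) * M * (S - l) = M * (g b - g a) := by
    have hba : (b:ℝ) - a ≠ 0 := sub_ne_zero.mpr hab.ne'
    rw [hS, hga, hgb]
    field_simp
    ring
  -- scalar bounds
  have hub1 : (x - p) * (g x - g p) ≤ M * (g x - g p) :=
    mul_le_mul_of_nonneg_right hM2 (by linarith)
  have hub2 : (b - q) * (g b - g q) ≤ M * (g b - g q) := by
    rw [hbq]; exact mul_le_mul_of_nonneg_right hM1 (by linarith)
  have hub3 : M * (g x - g p) + M * (g b - g q) ≤ M * (g b - g a) := by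
    have := mul_le_mul_of_nonneg_left (show g x - g p + (g b - g q) ≤ g b - g a by linarith) hM0
    linarith [this]
  have hlb1 : (p - a) * (g p - g a) ≤ M * (g p - g a) := by
    rw [hpa]; exact mul_le_mul_of_nonneg_right hM1 (by linarith)
  have hlb2 : (q - x) * (g q - g x) ≤ M * (g q - g x) :=
    mul_le_mul_of_nonneg_right hM3 (by linarith)
  have hlb3 : M * (g p - g a) + M * (g q - g x) ≤ M * (g b - g a) := by
    have := mul_le_mul_of_nonneg_left (show g p - g a + (g q - g x) ≤ g b - g a by linarith) hM0
    linarith [this]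
  have hsplit2' : (∫ t in p..q, (g x - g t))
      = (∫ t in p..x, (g x - g t)) + (∫ t in x..q, (g x - g t)) :=
    (integral_add_adjacent_intervals (intervalIntegrable_const.sub hI2)
      (intervalIntegrable_const.sub hI3)).symm
  rw [key, hRHS, abs_le, hsplit2']
  constructor
  · linarith
  · linarith
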